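/- Let H be a closed affine half-space of ℝ^N with reflection σ_H and let Ω be measurable with σ_H(Ω) = Ω. For any measurable u, v : Ω → ℝ and any exponent m ∈ [1, ∞), the polarization is contractive in L^m: ‖u^H − v^H‖_{L^m(Ω)} ≤ ‖u − v‖_{L^m(Ω)}. -/

import Mathlib

open MeasureTheory ENNReal Set

-- convexity of t ↦ |t|^m
lemma convexOn_abs_rpow {m : ℝ} (hm : 1 ≤ m) :
    ConvexOn ℝ Set.univ (fun t : ℝ => |t| ^ m) := by
  have h1 : ConvexOn ℝ Set.univ (fun t : ℝ => |t|) := by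
    convert convexOn_univ_norm (E := ℝ) using 1 <;> first | rfl | (funext t; exact (Real.norm_eq_abs t).symm)
  have h2 : ConvexOn ℝ ((fun t : ℝ => |t|) '' Set.univ) (fun x : ℝ => x ^ m) :=
    (convexOn_rpow hm).subset (by rintro x ⟨y, -, rfl⟩; exact abs_nonneg y)
      (by
        have : (fun t : ℝ => |t|) '' Set.univ = Ici 0 := by
          ext x; simp [abs_nonneg, eq_comm (a := x)]
          constructor
          · rintro ⟨y, rfl⟩; exact abs_nonneg y
          · intro hx; exact ⟨x, abs_of_nonneg hx⟩
        rw [this]; exact convex_Ici 0)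
  have h3 : MonotoneOn (fun x : ℝ => x ^ m) ((fun t : ℝ => |t|) '' Set.univ) := by
    rintro x ⟨a, -, rfl⟩ y ⟨b, -, rfl⟩ hxy
    exact Real.rpow_le_rpow (abs_nonneg a) hxy (le_trans zero_le_one hm)
  exact h2.comp h1 h3

-- key: f x + f (p+q-x) ≤ f p + f q for p ≤ x ≤ q
lemma key_segment {m : ℝ} (hm : 1 ≤ m) {p q x : ℝ} (hpx : p ≤ x) (hxq : x ≤ q) :
    |x| ^ m + |p + q - x| ^ m ≤ |p| ^ m + |q| ^ m := by
  have hf := convexOn_abs_rpow hm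
  have hg : ConvexOn ℝ Set.univ (fun t : ℝ => |t| ^ m + |p + q - t| ^ m) := by
    refine hf.add ?_
    have := hf.comp_affineMap
      (AffineMap.mk (fun t : ℝ => p + q - t) (LinearMap.id.smulRight (-1 : ℝ)) ?_)
    · convert this using 1 <;> first | rfl | (funext t; simp)
    · intro u w; simp; ring
  have hmem : x ∈ segment ℝ p q := by
    rw [segment_eq_Icc (hpx.trans hxq)]; exact ⟨hpx, hxq⟩
  have := hg.le_on_segment (Set.mem_univ p) (Set.mem_univ q) hmem
  calc |x| ^ m + |p + q - x| ^ m
      ≤ max (|p| ^ m + |p + q - p| ^ m) (|q| ^ m + |p + q - q| ^ m) := this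
    _ = |p| ^ m + |q| ^ m := by
        simp only [add_sub_cancel_left, add_sub_cancel_right]
        rw [add_comm (|q| ^ m), max_self]

lemma key4 {m : ℝ} (hm : 1 ≤ m) (a b a' b' : ℝ) :
    |max a b - max a' b'| ^ m + |min a b - min a' b'| ^ m
      ≤ |a - a'| ^ m + |b - b'| ^ m := by
  rcases le_total a b with hab | hab <;> rcases le_total a' b' with hab' | hab'
  · rw [max_eq_right hab, max_eq_right hab', min_eq_left hab, min_eq_left hab', add_comm]
  · rw [max_eq_right hab, max_eq_left hab', min_eq_left hab, min_eq_right hab']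
    have h := key_segment hm (p := a - a') (q := b - b') (x := b - a')
      (by linarith) (by linarith)
    have e : a - a' + (b - b') - (b - a') = a - b' := by ring
    rw [e] at h; exact h
  · rw [max_eq_left hab, max_eq_right hab', min_eq_right hab, min_eq_left hab']
    have h := key_segment hm (p := b - b') (q := a - a') (x := a - b')
      (by linarith) (by linarith)
    have e : b - b' + (a - a') - (a - b') = b - a' := by ring
    rw [e] at h; linarith
  · rw [max_eq_left hab, max_eq_left hab', min_eq_right hab, min_eq_right hab']

open Classical in
noncomputable def polarization {N : ℕ} (H : Set (EuclideanSpace ℝ (Fin N)))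
    (σ : EuclideanSpace ℝ (Fin N) → EuclideanSpace ℝ (Fin N))
    (u : EuclideanSpace ℝ (Fin N) → ℝ) : EuclideanSpace ℝ (Fin N) → ℝ :=
  fun x => if x ∈ H then max (u x) (u (σ x)) else min (u x) (u (σ x))

/-- Polarization is contractive in `L^m(Ω)` for every `1 ≤ m < ∞`. -/
theorem polarization_contractive_Lm {N : ℕ}
    (H : Set (EuclideanSpace ℝ (Fin N))) (hHcl : IsClosed H)
    (σ : EuclideanSpace ℝ (Fin N) → EuclideanSpace ℝ (Fin N))
    (hσiso : Isometry σ) (hσinv : Function.Involutive σ)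
    (hσmp : MeasurePreserving σ volume volume)
    (hH1 : ∀ x ∈ H, σ x ∈ H → σ x = x)
    (hH2 : ∀ x ∉ H, σ x ∈ H)
    (Ω : Set (EuclideanSpace ℝ (Fin N))) (hΩ : MeasurableSet Ω)
    (hΩσ : σ '' Ω = Ω)
    (u v : EuclideanSpace ℝ (Fin N) → ℝ) (hu : Measurable u) (hv : Measurable v)
    (m : ℝ) (hm : 1 ≤ m) :
    ∫⁻ x in Ω, ENNReal.ofReal (|polarization H σ u x - polarization H σ v x| ^ m)
      ≤ ∫⁻ x in Ω, ENNReal.ofReal (|u x - v x| ^ m) := by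
  have hσm : Measurable σ := hσiso.continuous.measurable
  set F : EuclideanSpace ℝ (Fin N) → ℝ≥0∞ :=
    fun x => ENNReal.ofReal (|polarization H σ u x - polarization H σ v x| ^ m) with hFdef
  set G : EuclideanSpace ℝ (Fin N) → ℝ≥0∞ :=
    fun x => ENNReal.ofReal (|u x - v x| ^ m) with hGdef
  have hpolm : ∀ w : EuclideanSpace ℝ (Fin N) → ℝ, Measurable w →
      Measurable (polarization H σ w) := fun w hw =>
    Measurable.ite hHcl.measurableSet (hw.max (hw.comp hσm)) (hw.min (hw.comp hσm))
  have hF : Measurable F :=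
    ((((hpolm u hu).sub (hpolm v hv)).abs).pow measurable_const).ennreal_ofReal
  have hG : Measurable G := (((hu.sub hv).abs).pow measurable_const).ennreal_ofReal
  have hpre : σ ⁻¹' Ω = Ω := by
    ext x
    simp only [Set.mem_preimage]
    constructor
    · intro h
      rw [← hΩσ]
      exact ⟨σ x, h, hσinv x⟩
    · intro h
      rw [← hΩσ]
      exact ⟨x, h, rfl⟩
  have hFσ : ∫⁻ x in Ω, F (σ x) = ∫⁻ x in Ω, F x := by
    have := hσmp.setLIntegral_comp_preimage (s := Ω) hΩ hF
    rwa [hpre] at this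
  have hGσ : ∫⁻ x in Ω, G (σ x) = ∫⁻ x in Ω, G x := by
    have := hσmp.setLIntegral_comp_preimage (s := Ω) hΩ hG
    rwa [hpre] at this
  have hnn : ∀ t : ℝ, 0 ≤ |t| ^ m := fun t => Real.rpow_nonneg (abs_nonneg t) m
  have hpt : ∀ x, F x + F (σ x) ≤ G x + G (σ x) := by
    intro x
    by_cases hx : x ∈ H
    · by_cases hsx : σ x ∈ H
      · have hfix : σ x = x := hH1 x hx hsx
        simp only [hFdef, hGdef, polarization, if_pos hx, if_pos hsx, hfix, max_self]
        exact le_refl _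
      · have hx2 : σ (σ x) = x := hσinv x
        simp only [hFdef, hGdef, polarization, if_pos hx, if_neg hsx, hx2]
        rw [← ENNReal.ofReal_add (hnn _) (hnn _), ← ENNReal.ofReal_add (hnn _) (hnn _)]
        apply ENNReal.ofReal_le_ofReal
        rw [min_comm (u (σ x)), min_comm (v (σ x))]
        exact key4 hm _ _ _ _
    · have hsx : σ x ∈ H := hH2 x hx
      have hx2 : σ (σ x) = x := hσinv x
      simp only [hFdef, hGdef, polarization, if_neg hx, if_pos hsx, hx2]
      rw [← ENNReal.ofReal_add (hnn _) (hnn _), ← ENNReal.ofReal_add (hnn _) (hnn _)]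
      apply ENNReal.ofReal_le_ofReal
      rw [min_comm (u x), min_comm (v x)]
      linarith [key4 hm (u (σ x)) (u x) (v (σ x)) (v x)]
  have h2 : 2 * ∫⁻ x in Ω, F x ≤ 2 * ∫⁻ x in Ω, G x := by
    rw [two_mul, two_mul]
    calc (∫⁻ x in Ω, F x) + ∫⁻ x in Ω, F x
        = (∫⁻ x in Ω, F x) + ∫⁻ x in Ω, F (σ x) := by rw [hFσ]
      _ = ∫⁻ x in Ω, (F x + F (σ x)) := (lintegral_add_left hF _).symm
      _ ≤ ∫⁻ x in Ω, (G x + G (σ x)) := lintegral_mono hpt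
      _ = (∫⁻ x in Ω, G x) + ∫⁻ x in Ω, G (σ x) := lintegral_add_left hG _
      _ = (∫⁻ x in Ω, G x) + ∫⁻ x in Ω, G x := by rw [hGσ]
  exact (ENNReal.mul_le_mul_iff_right two_ne_zero ENNReal.ofNat_ne_top).mp h2
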